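/- Let x₁,…,x₇, y₁,…,y₇ ∈ ℝ³ be nonzero vectors, and let F₁, F₂ be real 3×3 matrices that form a basis of the linear space L = {F ∈ ℝ^{3×3} : yᵢᵀ·F·xᵢ = 0 for all i = 1,…,7}. Then: (1) if a, b ∈ ℝ³ are nonzero and there exists a nonzero real 3×3 matrix F with yᵢᵀ·F·xᵢ = 0 for all i = 1,…,7, F·a = 0, and Fᵀ·b = 0, then (F₁·a) × (F₂·a) = 0 and (F₁ᵀ·b) × (F₂ᵀ·b) = 0; (2) if a ∈ ℝ³ is nonzero and F₁·a and F₂·a are not both zero, then any two nonzero matrices F, F′ ∈ span{F₁, F₂} with F·a = 0 and F′·a = 0 are proportional (F′ = λ·F for some nonzero real λ). -/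
import Mathlib


open Matrix

/-- The cross product on ℝ³. -/
def cross3 (u v : Fin 3 → ℝ) : Fin 3 → ℝ :=
  ![u 1 * v 2 - u 2 * v 1, u 2 * v 0 - u 0 * v 2, u 0 * v 1 - u 1 * v 0]

private lemma cross3_zero_of_dep (u v : Fin 3 → ℝ) (c d : ℝ) (hcd : ¬(c = 0 ∧ d = 0))
    (h : ∀ j, c * u j + d * v j = 0) : cross3 u v = 0 := by
  have key : ∀ p q : Fin 3, u p * v q - u q * v p = 0 := by
    intro p q
    have hc2 : c * (u p * v q - u q * v p) = 0 := by
      linear_combination v q * h p - v p * h q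
    have hd2 : d * (u p * v q - u q * v p) = 0 := by
      linear_combination u p * h q - u q * h p
    rcases not_and_or.mp hcd with hc | hd
    · exact (mul_eq_zero.mp hc2).resolve_left hc
    · exact (mul_eq_zero.mp hd2).resolve_left hd
  funext i
  fin_cases i
  · simpa [cross3] using key 1 2
  · simpa [cross3] using key 2 0
  · simpa [cross3] using key 0 1

/-- Concrete form of Theorem 32 (n = 7): each camera center lies on the common
zero locus of three conics given by the vanishing cross products, where
`F₁, F₂` is a basis of the pencil of matrices satisfying the seven incidence
constraints; and once one center is fixed, the fundamental matrix in the
pencil is uniquely determined up to scale. -/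
theorem seven_points_three_conics_and_uniqueness
    (x y : Fin 7 → Fin 3 → ℝ)
    (hx : ∀ i, x i ≠ 0) (hy : ∀ i, y i ≠ 0)
    (F₁ F₂ : Matrix (Fin 3) (Fin 3) ℝ)
    (hmem : ∀ i, y i ⬝ᵥ F₁.mulVec (x i) = 0 ∧ y i ⬝ᵥ F₂.mulVec (x i) = 0)
    (hind : LinearIndependent ℝ ![F₁, F₂])
    (hspan : ∀ F : Matrix (Fin 3) (Fin 3) ℝ,
      (∀ i, y i ⬝ᵥ F.mulVec (x i) = 0) → F ∈ Submodule.span ℝ {F₁, F₂}) :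
    (∀ a b : Fin 3 → ℝ, a ≠ 0 → b ≠ 0 →
      (∃ F : Matrix (Fin 3) (Fin 3) ℝ, F ≠ 0 ∧
        (∀ i, y i ⬝ᵥ F.mulVec (x i) = 0) ∧ F.mulVec a = 0 ∧ Fᵀ.mulVec b = 0) →
      cross3 (F₁.mulVec a) (F₂.mulVec a) = 0 ∧
      cross3 (F₁ᵀ.mulVec b) (F₂ᵀ.mulVec b) = 0) ∧
    (∀ a : Fin 3 → ℝ, a ≠ 0 → ¬(F₁.mulVec a = 0 ∧ F₂.mulVec a = 0) →
      ∀ F F' : Matrix (Fin 3) (Fin 3) ℝ, F ≠ 0 → F' ≠ 0 →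
        F ∈ Submodule.span ℝ {F₁, F₂} → F' ∈ Submodule.span ℝ {F₁, F₂} →
        F.mulVec a = 0 → F'.mulVec a = 0 →
        ∃ lam : ℝ, lam ≠ 0 ∧ F' = lam • F) := by
  constructor
  · rintro a b ha hb ⟨F, hF0, hFmem, hFa, hFb⟩
    obtain ⟨c, d, hF⟩ := Submodule.mem_span_pair.mp (hspan F hFmem)
    have hcd : ¬(c = 0 ∧ d = 0) := by
      rintro ⟨rfl, rfl⟩
      apply hF0
      rw [← hF]; simp
    constructor
    · refine cross3_zero_of_dep _ _ c d hcd fun j => ?_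
      have h1 : (c • F₁ + d • F₂).mulVec a = 0 := by rw [hF]; exact hFa
      have h2 := congrFun h1 j
      simpa [add_mulVec, smul_mulVec] using h2
    · refine cross3_zero_of_dep _ _ c d hcd fun j => ?_
      have h1 : (c • F₁ᵀ + d • F₂ᵀ).mulVec b = 0 := by
        rw [← transpose_smul, ← transpose_smul, ← transpose_add, hF]; exact hFb
      have h2 := congrFun h1 j
      simpa [add_mulVec, smul_mulVec] using h2
  · rintro a ha hnz F F' hF0 hF'0 hFs hF's hFa hF'a
    obtain ⟨c, d, hF⟩ := Submodule.mem_span_pair.mp hFs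
    obtain ⟨c', d', hF'⟩ := Submodule.mem_span_pair.mp hF's
    have hu : ∀ j, c * F₁.mulVec a j + d * F₂.mulVec a j = 0 := by
      intro j
      have h1 : (c • F₁ + d • F₂).mulVec a = 0 := by rw [hF]; exact hFa
      simpa [add_mulVec, smul_mulVec] using congrFun h1 j
    have hv : ∀ j, c' * F₁.mulVec a j + d' * F₂.mulVec a j = 0 := by
      intro j
      have h1 : (c' • F₁ + d' • F₂).mulVec a = 0 := by rw [hF']; exact hF'a
      simpa [add_mulVec, smul_mulVec] using congrFun h1 j
    -- the determinant of the 2×2 coefficient system vanishes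
    have hdet : d * c' - d' * c = 0 := by
      rcases not_and_or.mp hnz with h | h
      · obtain ⟨j, hj⟩ := Function.ne_iff.mp h
        have h1 : (d * c' - d' * c) * F₁.mulVec a j = 0 := by
          linear_combination d * hv j - d' * hu j
        exact (mul_eq_zero.mp h1).resolve_right hj
      · obtain ⟨j, hj⟩ := Function.ne_iff.mp h
        have h1 : (d * c' - d' * c) * F₂.mulVec a j = 0 := by
          linear_combination c' * hu j - c * hv j
        exact (mul_eq_zero.mp h1).resolve_right hj
    have hcd : ¬(c = 0 ∧ d = 0) := by
      rintro ⟨rfl, rfl⟩; apply hF0; rw [← hF]; simp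
    have hcd' : ¬(c' = 0 ∧ d' = 0) := by
      rintro ⟨rfl, rfl⟩; apply hF'0; rw [← hF']; simp
    rcases not_and_or.mp hcd with hc | hd
    · have hc' : c' ≠ 0 := by
        intro h0
        have : d' = 0 := by
          have : d' * c = 0 := by linear_combination -hdet + d * h0
          exact (mul_eq_zero.mp this).resolve_right hc
        exact hcd' ⟨h0, this⟩
      refine ⟨c' / c, div_ne_zero hc' hc, ?_⟩
      rw [← hF, ← hF']
      rw [smul_add, smul_smul, smul_smul]
      congr 1
      · rw [div_mul_cancel₀ _ hc]
      · congr 1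
        field_simp
        linarith [hdet]
    · have hd' : d' ≠ 0 := by
        intro h0
        have : c' = 0 := by
          have : d * c' = 0 := by linear_combination hdet + c * h0
          exact (mul_eq_zero.mp this).resolve_left hd
        exact hcd' ⟨this, h0⟩
      refine ⟨d' / d, div_ne_zero hd' hd, ?_⟩
      rw [← hF, ← hF']
      rw [smul_add, smul_smul, smul_smul]
      congr 1
      · congr 1
        field_simp
        linarith [hdet]
      · rw [div_mul_cancel₀ _ hd]
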